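/- There exists a tight (3,3)-design in F_2^{24}: a code C ⊆ F_2^{24} with M_2(C) = M_4(C) = M_6(C) = 0 and |C| = 2048 = ∑_{i=0}^3 C(23, i). -/

import Mathlib

open Finset

/-- The Krawtchouk polynomials `Q_i^{(n)}(t)`, determined by `Q_0 = 1`, `Q_1 = t` and the
three-term recurrence `n·t·Q_i(t) = (n−i)·Q_{i+1}(t) + i·Q_{i−1}(t)`. -/
noncomputable def kraw (n : ℕ) : ℕ → ℝ → ℝ
  | 0, _ => 1
  | 1, t => t
  | (i+2), t =>
      ((n : ℝ) * t * kraw n (i+1) t - ((i : ℝ) + 1) * kraw n i t) / ((n : ℝ) - ((i : ℝ) + 1))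

/-- The "inner product" `⟨x,y⟩ = 1 − 2 d(x,y)/n`. -/
noncomputable def ip (n : ℕ) (x y : Fin n → ZMod 2) : ℝ :=
  1 - 2 * (hammingDist x y : ℝ) / (n : ℝ)

/-- The `i`-th moment `M_i(C) = ∑_{x,y ∈ C} Q_i^{(n)}(⟨x,y⟩)`. -/
noncomputable def moment (n : ℕ) (C : Finset (Fin n → ZMod 2)) (i : ℕ) : ℝ :=
  ∑ x ∈ C, ∑ y ∈ C, kraw n i (ip n x y)

/-- The antipodal (complement) point `−x`. -/
def antip {n : ℕ} (x : Fin n → ZMod 2) : Fin n → ZMod 2 := fun j => x j + 1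

/-- `C` is a `(k,k)`-design: a nonempty code with `M_i(C) = 0` for all even `i` with `2 ≤ i ≤ 2k`. -/
def IsKKDesign (n k : ℕ) (C : Finset (Fin n → ZMod 2)) : Prop :=
  C.Nonempty ∧ ∀ j : ℕ, 1 ≤ j → j ≤ k → moment n C (2 * j) = 0

/-- `C` is an `m`-design: a nonempty code with `M_i(C) = 0` for all `1 ≤ i ≤ m`. -/
def IsMDesign (n m : ℕ) (C : Finset (Fin n → ZMod 2)) : Prop :=
  C.Nonempty ∧ ∀ i : ℕ, 1 ≤ i → i ≤ m → moment n C i = 0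

/-- Generalized binomial coefficient `C(z,j)` for real `z`. -/
noncomputable def gchoose (z : ℝ) (j : ℕ) : ℝ :=
  (∏ i ∈ Finset.range j, (z - (i : ℝ))) / (Nat.factorial j : ℝ)

/-- The Krawtchouk polynomial `K_i^{(m)}(z)` in the variable `z`. -/
noncomputable def krawK (m i : ℕ) (z : ℝ) : ℝ :=
  ∑ j ∈ Finset.range (i + 1), (-1 : ℝ) ^ j * gchoose z j * gchoose ((m : ℝ) - z) (i - j)

/-- The adjacent polynomial `Q_i^{1,1}(t) = K_i^{(n−2)}(n(1−t)/2 − 1) / ∑_{j=0}^i C(n−1,j)`. -/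
noncomputable def Q11 (n i : ℕ) (t : ℝ) : ℝ :=
  krawK (n - 2) i ((n : ℝ) * (1 - t) / 2 - 1) /
    (∑ j ∈ Finset.range (i + 1), ((n - 1).choose j : ℝ))

namespace Stmt14

def gpairs : List (ℕ × ℕ) :=
  [(0, 8394986), (1, 8401364), (2, 8414120), (3, 8439632), (4, 8490656),
   (5, 8592704), (6, 8796800), (7, 9204992), (8, 10021376), (9, 11654144),
   (10, 14919680)]

def golayN (m : ℕ) : ℕ :=
  gpairs.foldr (fun p r => (if m.testBit p.1 then p.2 else 0) ^^^ r) 0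

def pc : ℕ → ℕ → ℕ
  | 0, _ => 0
  | (f+1), n => n % 2 + pc f (n / 2)

def ww (m : ℕ) : ℕ := pc 24 (golayN m)

def encF (m : ℕ) (j : Fin 24) : ZMod 2 := if (golayN m).testBit (j : ℕ) then 1 else 0

def cntw (w : ℕ) : ℕ → ℕ → ℕ
  | 0, a => if ww a = w then 1 else 0
  | (d+1), a => cntw w d a + cntw w d (a + 2^d)

def allw : ℕ → ℕ → Bool
  | 0, a => decide ((ww a = 0 ∧ a = 0) ∨ ww a = 8 ∨ ww a = 12 ∨ ww a = 16)
  | (d+1), a => allw d a && allw d (a + 2^d)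

lemma xor4 (a b c d : ℕ) : (a ^^^ b) ^^^ (c ^^^ d) = (a ^^^ c) ^^^ (b ^^^ d) := by
  rw [Nat.xor_assoc, Nat.xor_assoc]
  congr 1
  rw [← Nat.xor_assoc, ← Nat.xor_assoc]
  congr 1
  exact Nat.xor_comm b c

lemma golay_add (k l : ℕ) : golayN (k ^^^ l) = golayN k ^^^ golayN l := by
  unfold golayN
  induction gpairs with
  | nil => simp
  | cons p L ih =>
    simp only [List.foldr_cons]
    rw [ih]
    have hbit : (if (k ^^^ l).testBit p.1 then p.2 else 0)
        = (if k.testBit p.1 then p.2 else 0) ^^^ (if l.testBit p.1 then p.2 else 0) := by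
      rw [Nat.testBit_xor]
      cases k.testBit p.1 <;> cases l.testBit p.1 <;> simp
    rw [hbit, xor4]

lemma golay_lt (m : ℕ) : golayN m < 2^24 := by
  unfold golayN
  have key : ∀ L : List (ℕ × ℕ), (∀ p ∈ L, p.2 < 2^24) →
      L.foldr (fun p r => (if m.testBit p.1 then p.2 else 0) ^^^ r) 0 < 2^24 := by
    intro L hL
    induction L with
    | nil => norm_num
    | cons p L ih =>
      simp only [List.foldr_cons]
      apply Nat.xor_lt_two_pow
      · split
        · exact hL p (List.mem_cons_self (a := p) (l := L))
        · norm_num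
      · exact ih (fun q hq => hL q (List.mem_cons_of_mem p hq))
  exact key gpairs (by decide)

lemma pc_eq_card : ∀ (d n : ℕ),
    pc d n = (Finset.univ.filter (fun j : Fin d => n.testBit (j : ℕ))).card := by
  intro d
  induction d with
  | zero => intro n; simp [pc]
  | succ d ih =>
    intro n
    rw [Finset.card_filter, Fin.sum_univ_succ]
    rw [show pc (d+1) n = n % 2 + pc d (n / 2) from rfl, ih, Finset.card_filter]
    congr 1
    · rcases Nat.mod_two_eq_zero_or_one n with h | h <;>
        simp [Nat.testBit_zero, h]
    · apply Finset.sum_congr rfl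
      intro j _
      rw [show ((j.succ : Fin (d+1)) : ℕ) = (j : ℕ) + 1 from rfl, Nat.testBit_add_one]

lemma dist_eq (k l : ℕ) : hammingDist (encF k) (encF l) = ww (k ^^^ l) := by
  rw [ww, golay_add, pc_eq_card]
  simp only [hammingDist]
  congr 1
  apply Finset.filter_congr
  intro j _
  simp only [encF, Nat.testBit_xor]
  cases hk : (golayN k).testBit (j : ℕ) <;> cases hl : (golayN l).testBit (j : ℕ) <;> simp

lemma cntw_eq (w : ℕ) : ∀ d a,
    cntw w d a = ((Finset.Ico a (a + 2^d)).filter (fun m => ww m = w)).card := by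
  intro d
  induction d with
  | zero =>
    intro a
    rw [pow_zero, Nat.Ico_succ_singleton, Finset.filter_singleton]
    by_cases h : ww a = w <;> simp [cntw, h]
  | succ d ih =>
    intro a
    have h2 : 2^(d+1) = 2^d + 2^d := by rw [pow_succ]; omega
    have hsplit : Finset.Ico a (a + 2^(d+1))
        = Finset.Ico a (a + 2^d) ∪ Finset.Ico (a + 2^d) (a + 2^d + 2^d) := by
      rw [Finset.Ico_union_Ico_eq_Ico (Nat.le_add_right _ _) (Nat.le_add_right _ _), h2]
      congr 1
      omega
    rw [show cntw w (d+1) a = cntw w d a + cntw w d (a + 2^d) from rfl, ih, ih, hsplit,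
      Finset.filter_union, Finset.card_union_of_disjoint
        (Finset.disjoint_filter_filter (Finset.Ico_disjoint_Ico_consecutive _ _ _))]

lemma allw_eq : ∀ d a, allw d a = true → ∀ m, a ≤ m → m < a + 2^d →
    ((ww m = 0 ∧ m = 0) ∨ ww m = 8 ∨ ww m = 12 ∨ ww m = 16) := by
  intro d
  induction d with
  | zero =>
    intro a h m h1 h2
    rw [pow_zero] at h2
    have hma : m = a := by omega
    subst hma
    exact of_decide_eq_true h
  | succ d ih =>
    intro a h m h1 h2
    rw [show allw (d+1) a = (allw d a && allw d (a + 2^d)) from rfl, Bool.and_eq_true] at h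
    have hp : 2^(d+1) = 2^d + 2^d := by rw [pow_succ]; omega
    by_cases hm : m < a + 2^d
    · exact ih a h.1 m h1 hm
    · exact ih (a + 2^d) h.2 m (by omega) (by omega)

set_option maxRecDepth 1000000 in
set_option maxHeartbeats 4000000 in
lemma c0 : cntw 0 11 0 = 1 := by decide

set_option maxRecDepth 1000000 in
set_option maxHeartbeats 4000000 in
lemma c8 : cntw 8 11 0 = 506 := by decide

set_option maxRecDepth 1000000 in
set_option maxHeartbeats 4000000 in
lemma c12 : cntw 12 11 0 = 1288 := by decide

set_option maxRecDepth 1000000 in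
set_option maxHeartbeats 4000000 in
lemma c16 : cntw 16 11 0 = 253 := by decide

set_option maxRecDepth 1000000 in
set_option maxHeartbeats 4000000 in
lemma callw : allw 11 0 = true := by decide

lemma ww_cases (m : ℕ) (hm : m < 2048) :
    (ww m = 0 ∧ m = 0) ∨ ww m = 8 ∨ ww m = 12 ∨ ww m = 16 :=
  allw_eq 11 0 callw m (Nat.zero_le _) (by norm_num; omega)

lemma inj : ∀ k ∈ Finset.range 2048, ∀ l ∈ Finset.range 2048, encF k = encF l → k = l := by
  intro k hk l hl h
  rw [Finset.mem_range] at hk hl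
  have hd : hammingDist (encF k) (encF l) = 0 := by rw [h]; exact hammingDist_self _
  rw [dist_eq] at hd
  have hxor : k ^^^ l < 2048 := by
    have h2 := Nat.xor_lt_two_pow (n := 11) (x := k) (y := l) (by norm_num; omega) (by norm_num; omega)
    norm_num at h2
    omega
  rcases ww_cases (k ^^^ l) hxor with ⟨_, h0⟩ | h8 | h12 | h16
  · exact xor_eq_zero_iff.mp h0
  all_goals omega

lemma kraw_succ (n i : ℕ) (t : ℝ) : kraw n (i+2) t =
    ((n : ℝ) * t * kraw n (i+1) t - ((i : ℝ) + 1) * kraw n i t) / ((n : ℝ) - ((i : ℝ) + 1)) := by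
  rw [kraw]

lemma kraw2 (t : ℝ) : kraw 24 2 t = (24*t^2 - 1)/23 := by
  have h := kraw_succ 24 0 t
  rw [show kraw 24 (0+1) t = t from rfl, show kraw 24 0 t = 1 from rfl] at h
  norm_num at h
  rw [h]; ring

lemma kraw3 (t : ℝ) : kraw 24 3 t = (288*t^3 - 35*t)/253 := by
  have h := kraw_succ 24 1 t
  rw [show kraw 24 (1+1) t = kraw 24 2 t from rfl, show kraw 24 1 t = t from rfl, kraw2] at h
  norm_num at h
  rw [h]; field_simp; ring

lemma kraw4 (t : ℝ) : kraw 24 4 t = (2304*t^4 - 544*t^2 + 11)/1771 := by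
  have h := kraw_succ 24 2 t
  rw [show kraw 24 (2+1) t = kraw 24 3 t from rfl, kraw2, kraw3] at h
  norm_num at h
  rw [h]; field_simp; ring

lemma kraw5 (t : ℝ) : kraw 24 5 t = (13824*t^5 - 5280*t^3 + 311*t)/8855 := by
  have h := kraw_succ 24 3 t
  rw [show kraw 24 (3+1) t = kraw 24 4 t from rfl, kraw3, kraw4] at h
  norm_num at h
  rw [h]; field_simp; ring

lemma kraw6 (t : ℝ) : kraw 24 6 t = (331776*t^6 - 184320*t^4 + 21064*t^2 - 275)/168245 := by
  have h := kraw_succ 24 4 t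
  rw [show kraw 24 (4+1) t = kraw 24 5 t from rfl, kraw4, kraw5] at h
  norm_num at h
  rw [h]; field_simp; ring

noncomputable def Ccode : Finset (Fin 24 → ZMod 2) := (Finset.range 2048).image encF

lemma Ccode_card : Ccode.card = 2048 := by
  rw [Ccode, Finset.card_image_of_injOn, Finset.card_range]
  intro k hk l hl h
  exact inj k (by simpa using hk) l (by simpa using hl) h

set_option maxRecDepth 10000 in
lemma moment_eq (i : ℕ) :
    moment 24 Ccode i
      = 2048 * ∑ w ∈ ({0, 8, 12, 16} : Finset ℕ),
          (cntw w 11 0 : ℝ) * kraw 24 i (1 - 2*(w : ℝ)/24) := by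
  rw [moment, Ccode, Finset.sum_image inj]
  have step1 : ∀ k ∈ Finset.range 2048,
      ∑ y ∈ (Finset.range 2048).image encF, kraw 24 i (ip 24 (encF k) y)
        = ∑ m ∈ Finset.range 2048, kraw 24 i (1 - 2*(ww m : ℝ)/24) := by
    intro k hk
    rw [Finset.sum_image inj]
    rw [Finset.mem_range] at hk
    have hmem : ∀ l ∈ Finset.range 2048, k ^^^ l ∈ Finset.range 2048 := by
      intro l hl
      rw [Finset.mem_range] at hl ⊢
      have := Nat.xor_lt_two_pow (n := 11) (x := k) (y := l) (by norm_num; omega) (by norm_num; omega)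
      norm_num at this
      omega
    refine Finset.sum_nbij' (fun l => k ^^^ l) (fun m => k ^^^ m) hmem hmem
      (fun l _ => xor_cancel_left k l) (fun m _ => xor_cancel_left k m) ?_
    intro l _
    rw [ip, dist_eq]
    simp only [Nat.cast_ofNat]
  rw [Finset.sum_congr rfl step1, Finset.sum_const, Finset.card_range, nsmul_eq_mul]
  push_cast
  congr 1
  have hmaps : ∀ m ∈ Finset.range 2048, ww m ∈ ({0, 8, 12, 16} : Finset ℕ) := by
    intro m hm
    rw [Finset.mem_range] at hm
    rcases ww_cases m hm with ⟨h, _⟩ | h | h | h <;> simp [h]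
  rw [← Finset.sum_fiberwise_of_maps_to hmaps (fun m => kraw 24 i (1 - 2*(ww m : ℝ)/24))]
  apply Finset.sum_congr rfl
  intro w _
  have : ∀ m ∈ (Finset.range 2048).filter (fun m => ww m = w),
      kraw 24 i (1 - 2*(ww m : ℝ)/24) = kraw 24 i (1 - 2*(w : ℝ)/24) := by
    intro m hm
    rw [(Finset.mem_filter.mp hm).2]
  have hcnt : ((cntw w 11 0 : ℕ) : ℝ)
      = (((Finset.range 2048).filter (fun m => ww m = w)).card : ℝ) := by
    rw [cntw_eq, Finset.range_eq_Ico]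
    norm_num
  rw [Finset.sum_congr rfl this, Finset.sum_const, nsmul_eq_mul, hcnt]

theorem main :
    moment 24 Ccode 2 = 0 ∧ moment 24 Ccode 4 = 0 ∧ moment 24 Ccode 6 = 0 := by
  refine ⟨?_, ?_, ?_⟩ <;>
  · rw [moment_eq]
    rw [show ({0, 8, 12, 16} : Finset ℕ)
        = insert 0 (insert 8 (insert 12 ({16} : Finset ℕ))) from rfl]
    rw [Finset.sum_insert (by decide), Finset.sum_insert (by decide),
      Finset.sum_insert (by decide), Finset.sum_singleton]
    rw [c0, c8, c12, c16]
    norm_num [kraw2, kraw4, kraw6]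

end Stmt14

/-- there exists a tight `(3,3)`-design in `F_2^{24}` of cardinality
`2048 = ∑_{i=0}^3 C(23,i)`. -/
theorem stmt_14 :
    ∃ C : Finset (Fin 24 → ZMod 2),
      moment 24 C 2 = 0 ∧ moment 24 C 4 = 0 ∧ moment 24 C 6 = 0 ∧
      C.card = 2048 ∧ C.card = ∑ i ∈ Finset.range 4, Nat.choose 23 i := by
  refine ⟨Stmt14.Ccode, Stmt14.main.1, Stmt14.main.2.1, Stmt14.main.2.2, Stmt14.Ccode_card, ?_⟩
  rw [Stmt14.Ccode_card]
  decide
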